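/- A nonprincipal ultrafilter on ℕ, viewed as a subset of Cantor space 2^ℕ, does not have the Baire property. -/

import Mathlib

open Classical in
/-- The identification of subsets of ℕ with points of Cantor space. -/
noncomputable def chi (A : Set ℕ) : ℕ → Bool := fun n => if n ∈ A then true else false

open Filter Set Topology

/-- Flipping coordinates according to a mask `b`, as a homeomorphism of Cantor space. -/
def flipHomeo (b : ℕ → Bool) : (ℕ → Bool) ≃ₜ (ℕ → Bool) where
  toFun x := fun n => xor (x n) (b n)
  invFun x := fun n => xor (x n) (b n)
  left_inv x := by
    funext n
    show xor (xor (x n) (b n)) (b n) = x n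
    cases x n <;> cases b n <;> rfl
  right_inv x := by
    funext n
    show xor (xor (x n) (b n)) (b n) = x n
    cases x n <;> cases b n <;> rfl
  continuous_toFun := continuous_pi fun n =>
    Continuous.comp (g := fun v : Bool => xor v (b n))
      continuous_of_discreteTopology (continuous_apply n)
  continuous_invFun := continuous_pi fun n =>
    Continuous.comp (g := fun v : Bool => xor v (b n))
      continuous_of_discreteTopology (continuous_apply n)

lemma ultra_mem_of_symmDiff_finite (U : Ultrafilter ℕ) (hU : ∀ A ∈ U, A.Infinite)
    {A B : Set ℕ} (h : (symmDiff A B).Finite) (hA : A ∈ U) : B ∈ U := by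
  have h1 : A \ B ∉ U := by
    intro hm
    exact (hU _ hm) (h.subset (by rw [Set.symmDiff_def]; exact subset_union_left))
  have h2 : (A \ B)ᶜ ∈ U := Ultrafilter.compl_mem_iff_notMem.mpr h1
  have h3 : A ∩ (A \ B)ᶜ ∈ U := Filter.inter_mem hA h2
  refine Filter.mem_of_superset h3 ?_
  intro x hx
  rcases hx with ⟨hxA, hx2⟩
  by_contra hxB
  exact hx2 ⟨hxA, hxB⟩

lemma chi_image (U : Ultrafilter ℕ) :
    chi '' {A : Set ℕ | A ∈ U} = {x : ℕ → Bool | {n | x n = true} ∈ U} := by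
  ext x
  constructor
  · rintro ⟨A, hA, rfl⟩
    have hAx : {n | chi A n = true} = A := by
      ext n; by_cases h : n ∈ A <;> simp [chi, h]
    simpa [hAx] using hA
  · intro hx
    refine ⟨{n | x n = true}, hx, ?_⟩
    funext n
    cases hxn : x n
    · simp [chi, hxn]
    · simp [chi, hxn]

theorem nonprincipal_ultrafilter_not_baireMeasurable
    (U : Ultrafilter ℕ) (hU : ∀ A ∈ U, A.Infinite) :
    ¬ BaireMeasurableSet (chi '' {A : Set ℕ | A ∈ U}) := by
  rw [chi_image]
  set S : Set (ℕ → Bool) := {x : ℕ → Bool | {n | x n = true} ∈ U} with hS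
  intro h
  -- Key fact 1: flipping a finite mask preserves S
  have K1 : ∀ b : ℕ → Bool, {n | b n = true}.Finite → (flipHomeo b) ⁻¹' S = S := by
    intro b hb
    ext x
    have hsd : {n | xor (x n) (b n) = true}
        = symmDiff {n | x n = true} {n | b n = true} := by
      ext n
      simp only [Set.mem_setOf_eq, Set.mem_symmDiff]
      cases x n <;> cases b n <;> simp
    simp only [Set.mem_preimage, hS, Set.mem_setOf_eq, flipHomeo, Homeomorph.homeomorph_mk_coe,
      Equiv.coe_fn_mk, hsd]
    constructor
    · intro hmem
      refine ultra_mem_of_symmDiff_finite U hU ?_ hmem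
      have : symmDiff (symmDiff {n | x n = true} {n | b n = true}) {n | x n = true}
          = {n | b n = true} := by
        rw [symmDiff_comm, symmDiff_symmDiff_cancel_left]
      rw [this]; exact hb
    · intro hmem
      refine ultra_mem_of_symmDiff_finite U hU ?_ hmem
      rw [symmDiff_symmDiff_cancel_left]; exact hb
  -- Key fact 2: the global flip sends S to its complement
  set σ : (ℕ → Bool) ≃ₜ (ℕ → Bool) := flipHomeo (fun _ => true) with hσ
  have K2 : σ ⁻¹' S = Sᶜ := by
    ext x
    have hcompl : {n | xor (x n) true = true} = {n | x n = true}ᶜ := by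
      ext n; cases hxn : x n <;> simp [hxn]
    simp only [Set.mem_preimage, hσ, flipHomeo, Homeomorph.homeomorph_mk_coe, Equiv.coe_fn_mk,
      hS, Set.mem_setOf_eq, Set.mem_compl_iff, hcompl]
    exact Ultrafilter.compl_mem_iff_notMem
  -- Key fact 3: S is not meager
  have K3 : ¬ IsMeagre S := by
    intro hm
    have hm2 : IsMeagre (σ ⁻¹' S) :=
      hm.preimage_of_isOpenMap σ.continuous σ.isOpenMap
    rw [K2] at hm2
    have h1 : Sᶜ ∈ residual (ℕ → Bool) := hm
    have h2 : S ∈ residual (ℕ → Bool) := by simpa [IsMeagre] using hm2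
    have hd := dense_of_mem_residual (Filter.inter_mem h2 h1)
    rw [Set.inter_compl_self] at hd
    exact Set.not_nonempty_empty hd.nonempty
  -- From Baire measurability, get an open set u with S =ᵇ u
  obtain ⟨u, huo, hsu⟩ := h.residualEq_isOpen
  rw [Filter.eventuallyEq_set] at hsu
  have husm : IsMeagre (u \ S) := by
    refine Filter.mem_of_superset hsu ?_
    intro y hy
    simp only [Set.mem_setOf_eq] at hy
    simp only [Set.mem_compl_iff, Set.mem_diff, not_and, not_not]
    intro hyu
    exact hy.mpr hyu
  by_cases hune : u.Nonempty
  swap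
  · -- u empty: S is meager
    refine K3 ?_
    rw [Set.not_nonempty_iff_eq_empty] at hune
    subst hune
    refine Filter.mem_of_superset hsu ?_
    intro y hy
    simp only [Set.mem_setOf_eq, Set.mem_empty_iff_false, iff_false] at hy
    exact hy
  obtain ⟨x, hxu⟩ := hune
  obtain ⟨I, v, hv, hsub⟩ := isOpen_pi_iff.mp huo x hxu
  -- cylinder over I at z
  set C : (ℕ → Bool) → Set (ℕ → Bool) := fun z => {y | ∀ i ∈ I, y i = z i} with hC
  have hCxu : C x ⊆ u := by
    intro y hy
    refine hsub ?_
    intro i hi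
    rw [hy i hi]
    exact (hv i hi).2
  have hCxS : IsMeagre (C x \ S) := husm.mono (fun y hy => ⟨hCxu hy.1, hy.2⟩ : C x \ S ⊆ u \ S)
  -- each translated cylinder minus S is meager
  have claim : ∀ z : ℕ → Bool, IsMeagre (C z \ S) := by
    intro z
    set b : ℕ → Bool := fun n => if n ∈ I then xor (x n) (z n) else false with hb
    have hbfin : {n | b n = true}.Finite := by
      refine I.finite_toSet.subset ?_
      intro n hn
      simp only [Set.mem_setOf_eq, hb] at hn
      by_contra hnI
      rw [Finset.mem_coe] at hnI
      simp [hnI] at hn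
    have hpre : (flipHomeo b) ⁻¹' (C x \ S) = C z \ S := by
      rw [Set.preimage_diff, K1 b hbfin]
      congr 1
      ext y
      simp only [Set.mem_preimage, flipHomeo, Homeomorph.homeomorph_mk_coe, Equiv.coe_fn_mk,
        hC, Set.mem_setOf_eq]
      constructor
      · intro hy i hi
        have := hy i hi
        rw [hb] at this
        simp only [hi, if_pos] at this
        revert this
        cases y i <;> cases x i <;> cases z i <;> simp
      · intro hy i hi
        rw [hy i hi, hb]
        simp only [hi, if_pos]
        cases x i <;> cases z i <;> simp
    rw [← hpre]
    exact hCxS.preimage_of_isOpenMap (flipHomeo b).continuous (flipHomeo b).isOpenMap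
  -- finitely many cylinders cover; conclude Sᶜ is meager
  set e : ({n // n ∈ I} → Bool) → (ℕ → Bool) :=
    fun s n => if h : n ∈ I then s ⟨n, h⟩ else false with he
  have hunion : IsMeagre (⋃ s : ({n // n ∈ I} → Bool), (C (e s) \ S)) := by
    rw [IsMeagre, Set.compl_iUnion]
    exact countable_iInter_mem.mpr (fun s => claim (e s))
  have hcover : Sᶜ ⊆ ⋃ s : ({n // n ∈ I} → Bool), (C (e s) \ S) := by
    intro y hy
    refine Set.mem_iUnion.mpr ⟨fun i => y i.1, ?_, hy⟩
    intro i hi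
    simp [he, hi]
  have hSc : IsMeagre Sᶜ := hunion.mono hcover
  refine K3 ?_
  have : IsMeagre (σ ⁻¹' Sᶜ) :=
    hSc.preimage_of_isOpenMap σ.continuous σ.isOpenMap
  rwa [Set.preimage_compl, K2, compl_compl] at this
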